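/- Let τ > 0, θ ∈ ℝ, t_max > 0, W̄ > 0, ε > 0, and let C be a finite index set together with one extra index N ∉ C. Let t_j, t̃_j ∈ [0, t_max] for all j ∈ C ∪ {N}, and let W_j (j ∈ C) and W̃_j (j ∈ C ∪ {N}) be weights with absolute value at most W̄. Assume ∑_{j∈C} W_j − θ > 0, ∑_{j∈C} W̃_j + W̃_N − θ ≥ ε, and that T := (∑_{j∈C} W_j · exp(t_j/τ)) / (∑_{j∈C} W_j − θ) satisfies T > 0 and t_N = τ · log T. Let T̃ := (∑_{j∈C} W̃_j · exp(t̃_j/τ) + W̃_N · exp(t̃_N/τ)) / (∑_{j∈C} W̃_j + W̃_N − θ). Then |T − T̃| ≤ (exp(t_max/τ) / (ε · τ)) · ∑_{j∈C∪{N}} W̄ · |t̃_j − t_j| + ((exp(t_max/τ) − 1) / ε) · ∑_{j∈C} |W̃_j − W_j|. -/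

import Mathlib

open Real Finset

lemma exp_sub_exp_abs_le' {x y M : ℝ} (hx : x ≤ M) (hy : y ≤ M) :
    |Real.exp x - Real.exp y| ≤ Real.exp M * |x - y| := by
  wlog h : y ≤ x generalizing x y
  · rw [abs_sub_comm, abs_sub_comm x y]; exact this hy hx (le_of_not_ge h)
  rw [abs_of_nonneg (sub_nonneg.mpr (Real.exp_le_exp.mpr h)),
      abs_of_nonneg (sub_nonneg.mpr h)]
  have h1 : Real.exp (y - x) * Real.exp x = Real.exp y := by
    rw [← Real.exp_add]; ring_nf
  nlinarith [Real.add_one_le_exp (y - x), Real.exp_pos x,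
    Real.exp_le_exp.mpr hx, sub_nonneg.mpr h]

theorem nLIF_spike_time_boundary_estimate
    {ι : Type*} [DecidableEq ι] (C : Finset ι) (N : ι) (hN : N ∉ C)
    (τ θ tmax Wbar ε : ℝ) (hτ : 0 < τ) (htmax : 0 < tmax) (hWbar : 0 < Wbar) (hε : 0 < ε)
    (t t' W W' : ι → ℝ)
    (ht : ∀ j ∈ insert N C, t j ∈ Set.Icc (0 : ℝ) tmax)
    (ht' : ∀ j ∈ insert N C, t' j ∈ Set.Icc (0 : ℝ) tmax)
    (hW : ∀ j ∈ C, |W j| ≤ Wbar)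
    (hW' : ∀ j ∈ insert N C, |W' j| ≤ Wbar)
    (hB : 0 < (∑ j ∈ C, W j) - θ)
    (hB' : ε ≤ (∑ j ∈ C, W' j) + W' N - θ)
    (T : ℝ)
    (hT : T = (∑ j ∈ C, W j * Real.exp (t j / τ)) / ((∑ j ∈ C, W j) - θ))
    (hTpos : 0 < T) (htN : t N = τ * Real.log T)
    (T' : ℝ)
    (hT' : T' = ((∑ j ∈ C, W' j * Real.exp (t' j / τ)) + W' N * Real.exp (t' N / τ)) /
      ((∑ j ∈ C, W' j) + W' N - θ)) :
    |T - T'| ≤ (Real.exp (tmax / τ) / (ε * τ)) * (∑ j ∈ insert N C, Wbar * |t' j - t j|)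
      + ((Real.exp (tmax / τ) - 1) / ε) * (∑ j ∈ C, |W' j - W j|) := by
  have hMpos : 0 < tmax / τ := div_pos htmax hτ
  set M := tmax / τ with hM
  set E := Real.exp M with hE
  have hE1 : 1 ≤ E := Real.one_le_exp hMpos.le
  have hB'pos : 0 < (∑ j ∈ C, W' j) + W' N - θ := lt_of_lt_of_le hε hB'
  have htNd : t N / τ = Real.log T := by rw [htN]; field_simp
  have hexpT : Real.exp (t N / τ) = T := by rw [htNd, Real.exp_log hTpos]
  have hNmem : N ∈ insert N C := Finset.mem_insert_self N C
  have hdM : ∀ j ∈ insert N C, 0 ≤ t j / τ ∧ t j / τ ≤ M := by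
    intro j hj
    obtain ⟨h0, h1⟩ := ht j hj
    exact ⟨by positivity, by rw [hM]; gcongr⟩
  have hdM' : ∀ j ∈ insert N C, 0 ≤ t' j / τ ∧ t' j / τ ≤ M := by
    intro j hj
    obtain ⟨h0, h1⟩ := ht' j hj
    exact ⟨by positivity, by rw [hM]; gcongr⟩
  have hT1 : 1 ≤ T := by
    rw [← hexpT]; exact Real.one_le_exp (hdM N hNmem).1
  have hTE : T ≤ E := by
    rw [← hexpT, hE]; exact Real.exp_le_exp.mpr (hdM N hNmem).2
  have hTB : T * ((∑ j ∈ C, W j) - θ) = ∑ j ∈ C, W j * Real.exp (t j / τ) := by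
    rw [hT]; field_simp
  set num := (∑ j ∈ C, (W j * Real.exp (t j / τ) - W' j * Real.exp (t' j / τ)
      + T * (W' j - W j))) + W' N * (Real.exp (t N / τ) - Real.exp (t' N / τ)) with hnumdef
  have hexpand : ∑ j ∈ C, (W j * Real.exp (t j / τ) - W' j * Real.exp (t' j / τ)
      + T * (W' j - W j))
      = (∑ j ∈ C, W j * Real.exp (t j / τ)) - (∑ j ∈ C, W' j * Real.exp (t' j / τ))
        + T * ((∑ j ∈ C, W' j) - (∑ j ∈ C, W j)) := by
    rw [Finset.sum_add_distrib, Finset.sum_sub_distrib, ← Finset.mul_sum,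
      Finset.sum_sub_distrib]
  have hnum : num = T * ((∑ j ∈ C, W' j) + W' N - θ)
      - ((∑ j ∈ C, W' j * Real.exp (t' j / τ)) + W' N * Real.exp (t' N / τ)) := by
    rw [hnumdef, hexpand, ← hTB, hexpT]; ring
  have hdiff : T - T' = num / ((∑ j ∈ C, W' j) + W' N - θ) := by
    rw [hT', hnum]
    field_simp
  -- per-term bounds
  have hterm : ∀ j ∈ C, |W j * Real.exp (t j / τ) - W' j * Real.exp (t' j / τ)
      + T * (W' j - W j)|
      ≤ E / τ * (Wbar * |t' j - t j|) + (E - 1) * |W' j - W j| := by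
    intro j hj
    have hjC : j ∈ insert N C := Finset.mem_insert_of_mem hj
    obtain ⟨h0, h1⟩ := hdM j hjC
    obtain ⟨h0', h1'⟩ := hdM' j hjC
    have he'1 : 1 ≤ Real.exp (t' j / τ) := Real.one_le_exp h0'
    have he'E : Real.exp (t' j / τ) ≤ E := Real.exp_le_exp.mpr h1'
    have key : W j * Real.exp (t j / τ) - W' j * Real.exp (t' j / τ) + T * (W' j - W j)
        = W j * (Real.exp (t j / τ) - Real.exp (t' j / τ))
          + (W' j - W j) * (T - Real.exp (t' j / τ)) := by ring
    rw [key]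
    have hlip : |Real.exp (t j / τ) - Real.exp (t' j / τ)| ≤ E * (|t' j - t j| / τ) := by
      have := exp_sub_exp_abs_le' h1 h1'
      have habs : |t j / τ - t' j / τ| = |t' j - t j| / τ := by
        rw [div_sub_div_same, abs_div, abs_of_pos hτ, abs_sub_comm]
      rw [habs] at this; exact this
    have hTsub : |T - Real.exp (t' j / τ)| ≤ E - 1 :=
      abs_sub_le_iff.mpr ⟨by linarith, by linarith⟩
    calc |W j * (Real.exp (t j / τ) - Real.exp (t' j / τ))
          + (W' j - W j) * (T - Real.exp (t' j / τ))|
        ≤ |W j| * |Real.exp (t j / τ) - Real.exp (t' j / τ)|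
          + |W' j - W j| * |T - Real.exp (t' j / τ)| := by
          refine (abs_add_le _ _).trans ?_
          rw [abs_mul, abs_mul]
      _ ≤ Wbar * (E * (|t' j - t j| / τ)) + |W' j - W j| * (E - 1) := by
          gcongr
          exact hW j hj
      _ = E / τ * (Wbar * |t' j - t j|) + (E - 1) * |W' j - W j| := by ring
  have hNterm : |W' N * (Real.exp (t N / τ) - Real.exp (t' N / τ))|
      ≤ E / τ * (Wbar * |t' N - t N|) := by
    obtain ⟨h0, h1⟩ := hdM N hNmem
    obtain ⟨h0', h1'⟩ := hdM' N hNmem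
    have hlip : |Real.exp (t N / τ) - Real.exp (t' N / τ)| ≤ E * (|t' N - t N| / τ) := by
      have := exp_sub_exp_abs_le' h1 h1'
      have habs : |t N / τ - t' N / τ| = |t' N - t N| / τ := by
        rw [div_sub_div_same, abs_div, abs_of_pos hτ, abs_sub_comm]
      rw [habs] at this; exact this
    calc |W' N * (Real.exp (t N / τ) - Real.exp (t' N / τ))|
        = |W' N| * |Real.exp (t N / τ) - Real.exp (t' N / τ)| := abs_mul _ _
      _ ≤ Wbar * (E * (|t' N - t N| / τ)) := by gcongr; exact hW' N hNmem
      _ = E / τ * (Wbar * |t' N - t N|) := by ring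
  have hnumbound : |num| ≤ E / τ * (∑ j ∈ insert N C, Wbar * |t' j - t j|)
      + (E - 1) * (∑ j ∈ C, |W' j - W j|) := by
    rw [hnumdef, Finset.sum_insert hN]
    calc |(∑ j ∈ C, (W j * Real.exp (t j / τ) - W' j * Real.exp (t' j / τ)
          + T * (W' j - W j))) + W' N * (Real.exp (t N / τ) - Real.exp (t' N / τ))|
        ≤ (∑ j ∈ C, |W j * Real.exp (t j / τ) - W' j * Real.exp (t' j / τ)
          + T * (W' j - W j)|) + |W' N * (Real.exp (t N / τ) - Real.exp (t' N / τ))| := by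
          refine (abs_add_le _ _).trans ?_
          gcongr
          exact Finset.abs_sum_le_sum_abs _ _
      _ ≤ (∑ j ∈ C, (E / τ * (Wbar * |t' j - t j|) + (E - 1) * |W' j - W j|))
          + E / τ * (Wbar * |t' N - t N|) := by
          exact add_le_add (Finset.sum_le_sum hterm) hNterm
      _ = E / τ * (Wbar * |t' N - t N| + ∑ j ∈ C, Wbar * |t' j - t j|)
          + (E - 1) * ∑ j ∈ C, |W' j - W j| := by
          rw [Finset.sum_add_distrib, mul_add, Finset.mul_sum, Finset.mul_sum]; ring
  rw [hdiff, abs_div, abs_of_pos hB'pos]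
  calc |num| / ((∑ j ∈ C, W' j) + W' N - θ) ≤ |num| / ε := by gcongr
    _ ≤ (E / τ * (∑ j ∈ insert N C, Wbar * |t' j - t j|)
        + (E - 1) * (∑ j ∈ C, |W' j - W j|)) / ε := by gcongr
    _ = E / (ε * τ) * (∑ j ∈ insert N C, Wbar * |t' j - t j|)
        + (E - 1) / ε * (∑ j ∈ C, |W' j - W j|) := by
        field_simp
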